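/- Let 𝓔_X be a ballean on X and 𝓔_Y a ballean on Y, both unbounded, with cof(𝓑_X) < non(𝓑_Y), where 𝓑_X and 𝓑_Y are the respective bornologies of bounded sets. If X and Y are both emu-bounded, then the product ballean on X × Y is emu-bounded. -/

import Mathlib

universe u

/-- A ballean on a set `X`: a family of entourages containing the diagonal,
closed (up to enlargement) under `E ∘ F⁻¹`, and covering `X × X`. -/
structure Ballean (X : Type*) where
  ent : Set (Set (X × X))
  diag : ∀ E ∈ ent, ∀ x : X, (x, x) ∈ E
  comp : ∀ E ∈ ent, ∀ F ∈ ent, ∃ D ∈ ent,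
    ∀ x z : X, (∃ y : X, (x, y) ∈ E ∧ (z, y) ∈ F) → (x, z) ∈ D
  cover : ∀ x y : X, ∃ E ∈ ent, (x, y) ∈ E

/-- The ball `E[x] = {y : (x,y) ∈ E}`. -/
def ball {X : Type*} (E : Set (X × X)) (x : X) : Set X := {y | (x, y) ∈ E}

/-- A set is bounded in a ballean if it is contained in some ball. -/
def Ballean.Bdd {X : Type*} (B : Ballean X) (S : Set X) : Prop :=
  ∃ E ∈ B.ent, ∃ x : X, S ⊆ ball E x

/-- `cof 𝓑`: minimal cardinality of a cofinal subfamily of `𝓑`. -/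
noncomputable def bornCof {X : Type u} (𝓑 : Set (Set X)) : Cardinal.{u} :=
  sInf {c : Cardinal.{u} | ∃ 𝓐 : Set (Set X), 𝓐 ⊆ 𝓑 ∧ Cardinal.mk 𝓐 = c ∧
    ∀ B ∈ 𝓑, ∃ A ∈ 𝓐, B ⊆ A}

/-- `non 𝓑`: minimal cardinality of a subset of `X` not in `𝓑`. -/
noncomputable def bornNon {X : Type u} (𝓑 : Set (Set X)) : Cardinal.{u} :=
  sInf {c : Cardinal.{u} | ∃ A : Set X, A ∉ 𝓑 ∧ Cardinal.mk A = c}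

/-- `cov 𝓑`: minimal cardinality of a subfamily of `𝓑` covering `X`. -/
noncomputable def bornCov {X : Type u} (𝓑 : Set (Set X)) : Cardinal.{u} :=
  sInf {c : Cardinal.{u} | ∃ 𝓐 : Set (Set X), 𝓐 ⊆ 𝓑 ∧ Cardinal.mk 𝓐 = c ∧
    ⋃₀ 𝓐 = Set.univ}

/-- `add 𝓑`: minimal cardinality of a subfamily of `𝓑` whose union is not in `𝓑`. -/
noncomputable def bornAdd {X : Type u} (𝓑 : Set (Set X)) : Cardinal.{u} :=
  sInf {c : Cardinal.{u} | ∃ 𝓐 : Set (Set X), 𝓐 ⊆ 𝓑 ∧ Cardinal.mk 𝓐 = c ∧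
    ⋃₀ 𝓐 ∉ 𝓑}

/-- A ballean is emu-bounded if every eventually macro-uniform `f : X → ℝ` is
bounded outside some bounded set. -/
def Ballean.EmuBounded {X : Type*} (B : Ballean X) : Prop :=
  ∀ f : X → ℝ,
    (∀ E ∈ B.ent, ∃ S : Set X, B.Bdd S ∧ ∃ C : ℝ,
      ∀ x ∉ S, ∀ a ∈ ball E x, ∀ b ∈ ball E x, |f a - f b| ≤ C) →
    ∃ S : Set X, B.Bdd S ∧ ∃ C : ℝ, ∀ x ∉ S, |f x| ≤ C

namespace Ballean

variable {X : Type*} (B : Ballean X)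

lemma inv_ent {E : Set (X × X)} (hE : E ∈ B.ent) :
    ∃ D ∈ B.ent, ∀ a b : X, (a, b) ∈ E → (b, a) ∈ D := by
  obtain ⟨D, hD, h⟩ := B.comp E hE E hE
  exact ⟨D, hD, fun a b hab => h b a ⟨b, B.diag E hE b, hab⟩⟩

lemma comp3 {E F : Set (X × X)} (hE : E ∈ B.ent) (hF : F ∈ B.ent) :
    ∃ D ∈ B.ent, ∀ a b c : X, (a, b) ∈ E → (b, c) ∈ F → (a, c) ∈ D := by
  obtain ⟨F', hF', hinv⟩ := B.inv_ent hF
  obtain ⟨D, hD, h⟩ := B.comp E hE F' hF'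
  exact ⟨D, hD, fun a b c hab hbc => h a c ⟨b, hab, hinv b c hbc⟩⟩

lemma bdd_mono {S S' : Set X} (h : S' ⊆ S) (hS : B.Bdd S) : B.Bdd S' := by
  obtain ⟨E, hE, x, hx⟩ := hS
  exact ⟨E, hE, x, h.trans hx⟩

lemma bdd_union {S S' : Set X} (hS : B.Bdd S) (hS' : B.Bdd S') : B.Bdd (S ∪ S') := by
  obtain ⟨E, hE, x, hx⟩ := hS
  obtain ⟨E', hE', x', hx'⟩ := hS'
  obtain ⟨G, hG, hxx'⟩ := B.cover x x'
  obtain ⟨D, hD, hDc⟩ := B.comp3 hG hE'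
  obtain ⟨D₂, hD₂, hD₂c⟩ := B.comp3 hE hD
  refine ⟨D₂, hD₂, x, ?_⟩
  rintro z (hz | hz)
  · exact hD₂c x z z (hx hz) (B.diag D hD z)
  · exact hD₂c x x z (B.diag E hE x) (hDc x x' z hxx' (hx' hz))

lemma bdd_singleton (x : X) : B.Bdd {x} := by
  obtain ⟨E, hE, _⟩ := B.cover x x
  exact ⟨E, hE, x, Set.singleton_subset_iff.mpr (B.diag E hE x)⟩

lemma bdd_insert {S : Set X} (x : X) (hS : B.Bdd S) : B.Bdd (insert x S) := by
  have h := B.bdd_union (B.bdd_singleton x) hS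
  rwa [← Set.insert_eq] at h

lemma exists_not_mem {S : Set X} (hXu : ¬ B.Bdd Set.univ) (hS : B.Bdd S) : ∃ x, x ∉ S := by
  by_contra h
  push_neg at h
  exact hXu (B.bdd_mono (fun z _ => h z) hS)

lemma self_ent {S : Set X} (hS : B.Bdd S) :
    ∃ E ∈ B.ent, ∀ x ∈ S, ∀ z ∈ S, (x, z) ∈ E := by
  obtain ⟨E₀, hE₀, x₀, hx₀⟩ := hS
  obtain ⟨E₁, hE₁, hinv⟩ := B.inv_ent hE₀
  obtain ⟨E₂, hE₂, hc⟩ := B.comp3 hE₁ hE₀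
  exact ⟨E₂, hE₂, fun x hx z hz => hc x x₀ z (hinv x₀ x (hx₀ hx)) (hx₀ hz)⟩

end Ballean

/-- If `X`, `Y` are unbounded emu-bounded balleans with `cof 𝓑_X < non 𝓑_Y`,
then the product ballean on `X × Y` is emu-bounded. -/
theorem prod_emuBounded_of_cof_lt_non {X Y : Type u} (BX : Ballean X) (BY : Ballean Y)
    (hXu : ¬ BX.Bdd Set.univ) (hYu : ¬ BY.Bdd Set.univ)
    (hcard : bornCof {S : Set X | BX.Bdd S} < bornNon {T : Set Y | BY.Bdd T})
    (hXemu : BX.EmuBounded) (hYemu : BY.EmuBounded) :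
    ∀ f : X × Y → ℝ,
      (∀ E ∈ BX.ent, ∀ F ∈ BY.ent,
        ∃ (S : Set X) (T : Set Y), BX.Bdd S ∧ BY.Bdd T ∧ ∃ C : ℝ,
          ∀ p : X × Y, p ∉ S ×ˢ T →
            ∀ a ∈ (ball E p.1) ×ˢ (ball F p.2), ∀ b ∈ (ball E p.1) ×ˢ (ball F p.2),
              |f a - f b| ≤ C) →
      ∃ (S : Set X) (T : Set Y), BX.Bdd S ∧ BY.Bdd T ∧
        ∃ C : ℝ, ∀ p : X × Y, p ∉ S ×ˢ T → |f p| ≤ C := by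
  intro f hf
  -- dispose of degenerate cases
  rcases isEmpty_or_nonempty Y with hYe | hYne
  · exfalso
    have h0 : (0 : Cardinal.{u}) ∈
        {c : Cardinal.{u} | ∃ A : Set Y, A ∉ {T : Set Y | BY.Bdd T} ∧ Cardinal.mk A = c} := by
      refine ⟨∅, fun hb => ?_, by simp⟩
      obtain ⟨E, hE, y, -⟩ := hb
      exact hYe.elim y
    have hle : bornNon {T : Set Y | BY.Bdd T} ≤ 0 := csInf_le' h0
    exact (not_lt_of_ge zero_le) (lt_of_lt_of_le hcard hle)
  obtain ⟨ystar⟩ := hYne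
  obtain ⟨F₀, hF₀, -⟩ := BY.cover ystar ystar
  rcases isEmpty_or_nonempty X with hXe | hXne
  · exfalso
    by_cases hentX : ∃ E, E ∈ BX.ent
    · obtain ⟨E₀, hE₀⟩ := hentX
      obtain ⟨S, T, hS, -⟩ := hf E₀ hE₀ F₀ hF₀
      obtain ⟨E, hE, x, -⟩ := hS
      exact hXe.elim x
    · obtain ⟨S, hS, -⟩ := hXemu (fun _ => 0) (fun E hE => absurd ⟨E, hE⟩ hentX)
      obtain ⟨E, hE, x, -⟩ := hS
      exact hXe.elim x
  obtain ⟨xstar⟩ := hXne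
  obtain ⟨E₀, hE₀, -⟩ := BX.cover xstar xstar
  -- uniform column oscillation
  have stepB : ∀ F ∈ BY.ent, ∃ T, BY.Bdd T ∧ ∃ D : ℝ, 0 ≤ D ∧
      ∀ (x : X) (y : Y), y ∉ T → ∀ b b' : Y, (y, b) ∈ F → (y, b') ∈ F →
        |f (x, b) - f (x, b')| ≤ D := by
    intro F hF
    obtain ⟨S, T, hS, hT, C, hC⟩ := hf E₀ hE₀ F hF
    refine ⟨T, hT, max C 0, le_max_right _ _, ?_⟩
    intro x y hy b b' hb hb'
    have hp : ((x, y) : X × Y) ∉ S ×ˢ T := fun hm => hy hm.2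
    have h := hC (x, y) hp (x, b) ⟨BX.diag E₀ hE₀ x, hb⟩ (x, b') ⟨BX.diag E₀ hE₀ x, hb'⟩
    exact h.trans (le_max_left _ _)
  -- each row is eventually bounded
  have hrow : ∀ y : Y, ∃ S, BX.Bdd S ∧ ∃ C : ℝ, ∀ x ∉ S, |f (x, y)| ≤ C := by
    intro y
    refine hXemu (fun x => f (x, y)) ?_
    intro E hE
    obtain ⟨S, T, hS, hT, C, hC⟩ := hf E hE F₀ hF₀
    refine ⟨S, hS, C, ?_⟩
    intro x hx a ha b hb
    have hp : ((x, y) : X × Y) ∉ S ×ˢ T := fun hm => hx hm.1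
    exact hC (x, y) hp (a, y) ⟨ha, BY.diag F₀ hF₀ y⟩ (b, y) ⟨hb, BY.diag F₀ hF₀ y⟩
  -- the eventual-bound function g
  set g : Y → ℝ := fun y =>
    sInf {r : ℝ | 0 ≤ r ∧ ∃ S, BX.Bdd S ∧ ∀ x, x ∉ S → |f (x, y)| ≤ r} with hgdef
  have gset_ne : ∀ y : Y,
      {r : ℝ | 0 ≤ r ∧ ∃ S, BX.Bdd S ∧ ∀ x, x ∉ S → |f (x, y)| ≤ r}.Nonempty := by
    intro y
    obtain ⟨S, hS, C, hC⟩ := hrow y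
    exact ⟨max C 0, le_max_right _ _, S, hS, fun x hx => (hC x hx).trans (le_max_left _ _)⟩
  have gset_bdd : ∀ y : Y,
      BddBelow {r : ℝ | 0 ≤ r ∧ ∃ S, BX.Bdd S ∧ ∀ x, x ∉ S → |f (x, y)| ≤ r} :=
    fun y => ⟨0, fun r hr => hr.1⟩
  have hgemu : ∀ F ∈ BY.ent, ∃ T, BY.Bdd T ∧ ∃ C : ℝ,
      ∀ y ∉ T, ∀ a ∈ ball F y, ∀ b ∈ ball F y, |g a - g b| ≤ C := by
    intro F hF
    obtain ⟨T, hT, D, hD0, hD⟩ := stepB F hF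
    refine ⟨T, hT, D, ?_⟩
    intro y hy a ha b hb
    have key : ∀ a b : Y, (y, a) ∈ F → (y, b) ∈ F → g a ≤ g b + D := by
      intro a b ha hb
      have hle : ∀ r ∈ {r : ℝ | 0 ≤ r ∧ ∃ S, BX.Bdd S ∧ ∀ x, x ∉ S → |f (x, b)| ≤ r},
          g a - D ≤ r := by
        intro r hr
        obtain ⟨hr0, S, hS, hSr⟩ := hr
        have hmem : (D + r) ∈
            {r : ℝ | 0 ≤ r ∧ ∃ S, BX.Bdd S ∧ ∀ x, x ∉ S → |f (x, a)| ≤ r} := by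
          refine ⟨by linarith, S, hS, fun x hx => ?_⟩
          have h1 := hD x y hy a b ha hb
          have h2 := hSr x hx
          have h3 := abs_sub_abs_le_abs_sub (f (x, a)) (f (x, b))
          linarith
        have := csInf_le (gset_bdd a) hmem
        rw [hgdef]
        simp only []
        linarith [show g a ≤ D + r from this]
      have h4 := le_csInf (gset_ne b) hle
      have h5 : g b = sInf _ := rfl
      linarith [h4]
    have h1 := key a b ha hb
    have h2 := key b a hb ha
    rw [abs_sub_le_iff]
    constructor <;> linarith
  obtain ⟨T₁, hT₁, C₁, hC₁⟩ := hYemu g hgemu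
  -- P1: uniform eventual row bound off T₁
  have P1 : ∀ y, y ∉ T₁ → ∃ S, BX.Bdd S ∧ ∀ x, x ∉ S → |f (x, y)| ≤ C₁ + 1 := by
    intro y hy
    have hlt : g y < C₁ + 1 := by
      have := (le_abs_self (g y)).trans (hC₁ y hy)
      linarith
    obtain ⟨r, hr, hrlt⟩ := (csInf_lt_iff (gset_bdd y) (gset_ne y)).mp hlt
    obtain ⟨hr0, S, hS, hSr⟩ := hr
    exact ⟨S, hS, fun x hx => (hSr x hx).trans hrlt.le⟩
  -- cardinal data
  have hcof_mem : bornCof {S : Set X | BX.Bdd S} ∈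
      {c : Cardinal.{u} | ∃ 𝓐 : Set (Set X), 𝓐 ⊆ {S : Set X | BX.Bdd S} ∧
        Cardinal.mk 𝓐 = c ∧ ∀ B ∈ {S : Set X | BX.Bdd S}, ∃ A ∈ 𝓐, B ⊆ A} := by
    have hne : {c : Cardinal.{u} | ∃ 𝓐 : Set (Set X), 𝓐 ⊆ {S : Set X | BX.Bdd S} ∧
        Cardinal.mk 𝓐 = c ∧ ∀ B ∈ {S : Set X | BX.Bdd S}, ∃ A ∈ 𝓐, B ⊆ A}.Nonempty :=
      ⟨Cardinal.mk {S : Set X | BX.Bdd S}, {S : Set X | BX.Bdd S}, subset_rfl,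
        rfl, fun B hB => ⟨B, hB, subset_rfl⟩⟩
    exact csInf_mem hne
  obtain ⟨𝓐, h𝓐sub, h𝓐mk, h𝓐cof⟩ := hcof_mem
  have hnonbd : ∀ Z : Set Y, Cardinal.mk Z < bornNon {T : Set Y | BY.Bdd T} → BY.Bdd Z := by
    intro Z hZ
    by_contra hZb
    have hmem : Cardinal.mk Z ∈ {c : Cardinal.{u} |
        ∃ A : Set Y, A ∉ {T : Set Y | BY.Bdd T} ∧ Cardinal.mk A = c} := ⟨Z, hZb, rfl⟩
    exact absurd (csInf_le' hmem) (not_le_of_gt hZ)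
  have hinf : Cardinal.aleph0 ≤ Cardinal.mk 𝓐 := by
    by_contra hfin
    push_neg at hfin
    have hfin' : 𝓐.Finite := by
      rwa [Cardinal.lt_aleph0_iff_set_finite] at hfin
    have hUb : BX.Bdd (⋃₀ 𝓐) := by
      apply Set.Finite.induction_on_subset (motive := fun s _ => BX.Bdd (⋃₀ s)) 𝓐 hfin'
      · rw [Set.sUnion_empty]
        exact ⟨E₀, hE₀, xstar, Set.empty_subset _⟩
      · intro a s haS hsS has ih
        rw [Set.sUnion_insert]
        exact BX.bdd_union (h𝓐sub haS) ih
    have huniv : (Set.univ : Set X) ⊆ ⋃₀ 𝓐 := by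
      intro x _
      obtain ⟨A, hA, hxA⟩ := h𝓐cof {x} (BX.bdd_singleton x)
      exact ⟨A, hA, hxA rfl⟩
    exact hXu (BX.bdd_mono huniv hUb)
  -- main case split
  by_cases hwin : ∃ n : ℕ, ∃ A ∈ 𝓐,
      BY.Bdd {y | y ∉ T₁ ∧ ∃ x, x ∉ A ∧ C₁ + 1 + (n : ℝ) < |f (x, y)|}
  · -- WIN case
    obtain ⟨n, A, hA𝓐, hRb⟩ := hwin
    have hAb : BX.Bdd A := h𝓐sub hA𝓐
    have hout : ∀ y, y ∉ T₁ →
        y ∉ {y | y ∉ T₁ ∧ ∃ x, x ∉ A ∧ C₁ + 1 + (n : ℝ) < |f (x, y)|} →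
        ∀ x, x ∉ A → |f (x, y)| ≤ C₁ + 1 + (n : ℝ) := by
      intro y hy1 hy2 x hx
      by_contra hlt
      push_neg at hlt
      exact hy2 ⟨hy1, x, hx, hlt⟩
    obtain ⟨xb, hxb⟩ := BX.exists_not_mem hXu hAb
    have hA' : BX.Bdd (insert xb A) := BX.bdd_insert xb hAb
    obtain ⟨E₁, hE₁, hE₁c⟩ := BX.self_ent hA'
    obtain ⟨Ss, Ts, hSs, hTs, Cs, hCs⟩ := hf E₁ hE₁ F₀ hF₀
    have hstrip : ∀ y, y ∉ Ts → ∀ x ∈ insert xb A, |f (x, y) - f (xb, y)| ≤ Cs := by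
      intro y hy x hx
      have hp : ((x, y) : X × Y) ∉ Ss ×ˢ Ts := fun hm => hy hm.2
      exact hCs (x, y) hp (x, y) ⟨BX.diag E₁ hE₁ x, BY.diag F₀ hF₀ y⟩ (xb, y)
        ⟨hE₁c x hx xb (Set.mem_insert _ _), BY.diag F₀ hF₀ y⟩
    set Tu : Set Y :=
      T₁ ∪ {y | y ∉ T₁ ∧ ∃ x, x ∉ A ∧ C₁ + 1 + (n : ℝ) < |f (x, y)|} ∪ Ts with hTudef
    have hTub : BY.Bdd Tu := BY.bdd_union (BY.bdd_union hT₁ hRb) hTs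
    set M₁ : ℝ := C₁ + 1 + (n : ℝ) + max Cs 0 with hM₁def
    have hM : ∀ y, y ∉ Tu → ∀ x, |f (x, y)| ≤ M₁ := by
      intro y hy x
      have hy1 : y ∉ T₁ := fun h => hy (Or.inl (Or.inl h))
      have hy2 : y ∉ {y | y ∉ T₁ ∧ ∃ x, x ∉ A ∧ C₁ + 1 + (n : ℝ) < |f (x, y)|} :=
        fun h => hy (Or.inl (Or.inr h))
      have hy3 : y ∉ Ts := fun h => hy (Or.inr h)
      by_cases hxA : x ∈ A
      · have h1 := hstrip y hy3 x (Set.mem_insert_of_mem _ hxA)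
        have h2 := hout y hy1 hy2 xb hxb
        have h3 := abs_sub_abs_le_abs_sub (f (x, y)) (f (xb, y))
        have h4 : Cs ≤ max Cs 0 := le_max_left _ _
        rw [hM₁def]; linarith
      · have h2 := hout y hy1 hy2 x hxA
        have h4 : (0:ℝ) ≤ max Cs 0 := le_max_right _ _
        rw [hM₁def]; linarith
    obtain ⟨yb, hyb⟩ := BY.exists_not_mem hYu hTub
    set T' : Set Y := insert yb Tu with hT'def
    have hT'b : BY.Bdd T' := BY.bdd_insert _ hTub
    obtain ⟨F₁, hF₁, hF₁c⟩ := BY.self_ent hT'b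
    obtain ⟨Sc, Tc, hSc, hTc, Cc, hCc⟩ := hf E₀ hE₀ F₁ hF₁
    have hcol : ∀ x, x ∉ Sc → ∀ y ∈ T', |f (x, y) - f (x, yb)| ≤ Cc := by
      intro x hx y hy
      have hp : ((x, y) : X × Y) ∉ Sc ×ˢ Tc := fun hm => hx hm.1
      exact hCc (x, y) hp (x, y) ⟨BX.diag E₀ hE₀ x, BY.diag F₁ hF₁ y⟩ (x, yb)
        ⟨BX.diag E₀ hE₀ x, hF₁c y hy yb (Set.mem_insert _ _)⟩
    refine ⟨Sc, T', hSc, hT'b, M₁ + max Cc 0, ?_⟩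
    rintro ⟨x, y⟩ hp
    by_cases hyT : y ∈ T'
    · have hxS : x ∉ Sc := fun h => hp (Set.mk_mem_prod h hyT)
      have h1 := hcol x hxS y hyT
      have h2 := hM yb (fun h => hyb h) x
      have h3 := abs_sub_abs_le_abs_sub (f (x, y)) (f (x, yb))
      have h4 : Cc ≤ max Cc 0 := le_max_left _ _
      linarith
    · have hyTu : y ∉ Tu := fun h => hyT (Set.mem_insert_of_mem _ h)
      have h1 := hM y hyTu x
      have h4 : (0:ℝ) ≤ max Cc 0 := le_max_right _ _
      linarith
  · -- CONTRADICTION case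
    exfalso
    push_neg at hwin
    have hRne : ∀ (n : ℕ) (A : ↥𝓐), ∃ y : Y, y ∉ T₁ ∧
        ∃ x, x ∉ (A : Set X) ∧ C₁ + 1 + (n : ℝ) < |f (x, y)| := by
      intro n A
      rcases Set.eq_empty_or_nonempty
        {y | y ∉ T₁ ∧ ∃ x, x ∉ (A : Set X) ∧ C₁ + 1 + (n : ℝ) < |f (x, y)|} with he | hne
      · exfalso
        refine hwin n A.1 A.2 ?_
        rw [he]
        exact ⟨F₀, hF₀, ystar, Set.empty_subset _⟩
      · obtain ⟨y, hy⟩ := hne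
        exact ⟨y, hy.1, hy.2⟩
    choose pick hpick1 hpick2 using hRne
    set Z : Set Y := Set.range (fun p : ULift.{u} ℕ × ↥𝓐 => pick p.1.down p.2) with hZdef
    have hZcard : Cardinal.mk Z < bornNon {T : Set Y | BY.Bdd T} := by
      have h1 : Cardinal.mk Z ≤ Cardinal.mk (ULift.{u} ℕ × ↥𝓐) := Cardinal.mk_range_le
      have h2 : Cardinal.mk (ULift.{u} ℕ × ↥𝓐) = Cardinal.aleph0 * Cardinal.mk ↥𝓐 := by
        simp
      have h3 : Cardinal.aleph0 * Cardinal.mk ↥𝓐 = Cardinal.mk ↥𝓐 := by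
        rw [Cardinal.mul_eq_max le_rfl hinf, max_eq_right hinf]
      calc Cardinal.mk Z ≤ Cardinal.mk (ULift.{u} ℕ × ↥𝓐) := h1
        _ = Cardinal.mk ↥𝓐 := by rw [h2, h3]
        _ = bornCof {S : Set X | BX.Bdd S} := h𝓐mk
        _ < bornNon {T : Set Y | BY.Bdd T} := hcard
    have hZb : BY.Bdd Z := hnonbd Z hZcard
    obtain ⟨Fq, hFq, hFqc⟩ := BY.self_ent hZb
    obtain ⟨Sq, Tq, hSq, hTq, Cq, hCq⟩ := hf E₀ hE₀ Fq hFq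
    -- anchor
    have h𝓐ne : ∃ A, A ∈ 𝓐 := by
      obtain ⟨A, hA, -⟩ := h𝓐cof {xstar} (BX.bdd_singleton xstar)
      exact ⟨A, hA⟩
    obtain ⟨A₀, hA₀⟩ := h𝓐ne
    set y₀ : Y := pick 0 ⟨A₀, hA₀⟩ with hy₀def
    have hy₀Z : y₀ ∈ Z := ⟨(ULift.up 0, ⟨A₀, hA₀⟩), rfl⟩
    have hy₀T₁ : y₀ ∉ T₁ := hpick1 0 ⟨A₀, hA₀⟩
    obtain ⟨S₀, hS₀, hS₀b⟩ := P1 y₀ hy₀T₁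
    have hZbound : ∀ z ∈ Z, ∀ x, x ∉ Sq ∪ S₀ → |f (x, z)| ≤ C₁ + 1 + Cq := by
      intro z hz x hx
      have hxq : x ∉ Sq := fun h => hx (Or.inl h)
      have hx0 : x ∉ S₀ := fun h => hx (Or.inr h)
      have hp : ((x, y₀) : X × Y) ∉ Sq ×ˢ Tq := fun hm => hxq hm.1
      have h1 := hCq (x, y₀) hp (x, z) ⟨BX.diag E₀ hE₀ x, hFqc y₀ hy₀Z z hz⟩ (x, y₀)
        ⟨BX.diag E₀ hE₀ x, BY.diag Fq hFq y₀⟩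
      have h2 := hS₀b x hx0
      have h3 := abs_sub_abs_le_abs_sub (f (x, z)) (f (x, y₀))
      linarith
    obtain ⟨Astar, hAstar, hsub⟩ := h𝓐cof (Sq ∪ S₀) (BX.bdd_union hSq hS₀)
    set nstar : ℕ := ⌈Cq⌉₊ with hnstardef
    obtain ⟨x, hx, hxgt⟩ := hpick2 nstar ⟨Astar, hAstar⟩
    have hzZ : pick nstar ⟨Astar, hAstar⟩ ∈ Z := ⟨(ULift.up nstar, ⟨Astar, hAstar⟩), rfl⟩
    have hb := hZbound _ hzZ x (fun hmem => hx (hsub hmem))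
    have hceil : Cq ≤ (nstar : ℝ) := Nat.le_ceil Cq
    linarith
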